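/- Let X₁, X₂ and Y be Banach spaces, let X = X₁ ⊕_1 X₂, and let T : X → Y be a bounded linear operator with restrictions T₁ and T₂. If T₁ and T₂ are narrow operators, then T is a narrow operator. -/

import Mathlib

/-- A bounded linear operator `T : X → Y` is *narrow* if for every `x, y` in the unit
sphere of `X`, every continuous linear functional `f` on `X` and every `ε > 0` there is
`z` in the unit sphere with `‖x + z‖ ≥ 2 - ε` and `‖T (y - z)‖ + |f (y - z)| ≤ ε`. -/
def IsNarrow {X Y : Type*} [NormedAddCommGroup X] [NormedSpace ℝ X]
    [NormedAddCommGroup Y] [NormedSpace ℝ Y] (T : X →L[ℝ] Y) : Prop :=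
  ∀ x y : X, ‖x‖ = 1 → ‖y‖ = 1 → ∀ f : X →L[ℝ] ℝ, ∀ ε : ℝ, 0 < ε →
    ∃ z : X, ‖z‖ = 1 ∧ 2 - ε ≤ ‖x + z‖ ∧ ‖T (y - z)‖ + |f (y - z)| ≤ ε

/-- Scaled version of narrowness: for arbitrary `x` and `y` with `‖y‖ ≤ 1`, we find `z`
with `‖z‖ = ‖y‖`, almost additive norm on `x + z`, and small `‖T (y - z)‖ + |f (y - z)|`. -/
lemma IsNarrow.exists_scaled {X Y : Type*} [NormedAddCommGroup X] [NormedSpace ℝ X]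
    [NormedAddCommGroup Y] [NormedSpace ℝ Y] (T : X →L[ℝ] Y) (h : IsNarrow T)
    (x y : X) (hy1 : ‖y‖ ≤ 1) (f : X →L[ℝ] ℝ) (δ : ℝ) (hδ : 0 < δ) (hδ1 : δ < 1) :
    ∃ z : X, ‖z‖ = ‖y‖ ∧ (‖x‖ + ‖y‖) * (1 - δ) ≤ ‖x + z‖ ∧
      ‖T (y - z)‖ + |f (y - z)| ≤ δ := by
  classical
  by_cases hy : y = 0
  · refine ⟨0, by simp [hy], ?_, by simp [hy, hδ.le]⟩
    simp only [hy, norm_zero, add_zero]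
    nlinarith [norm_nonneg x, hδ.le]
  · have hb0 : 0 < ‖y‖ := norm_pos_iff.mpr hy
    set b := ‖y‖ with hb
    set yh : X := b⁻¹ • y with hyh_def
    have hyh : ‖yh‖ = 1 := by
      rw [hyh_def, norm_smul, norm_inv, Real.norm_eq_abs, abs_of_pos hb0, ← hb,
        inv_mul_cancel₀ hb0.ne']
    have hby : b • yh = y := by rw [hyh_def, smul_inv_smul₀ hb0.ne']
    set xh : X := if x = 0 then yh else ‖x‖⁻¹ • x with hxh_def
    have hxh : ‖xh‖ = 1 := by
      rw [hxh_def]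
      split_ifs with hx0
      · exact hyh
      · rw [norm_smul, norm_inv, Real.norm_eq_abs, abs_of_pos (norm_pos_iff.mpr hx0),
          inv_mul_cancel₀ (norm_pos_iff.mpr hx0).ne']
    have hbx : ‖x‖ • xh = x := by
      rw [hxh_def]
      split_ifs with hx0
      · simp [hx0]
      · rw [smul_inv_smul₀ (norm_pos_iff.mpr hx0).ne']
    obtain ⟨z', hz'1, hz'2, hz'3⟩ := h xh yh hxh hyh f δ hδ
    refine ⟨b • z', ?_, ?_, ?_⟩
    · rw [norm_smul, Real.norm_eq_abs, abs_of_pos hb0, hz'1, mul_one]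
    · -- use a norming functional for xh + z'
      have hv0 : xh + z' ≠ 0 := by
        intro hv
        rw [hv, norm_zero] at hz'2
        linarith
      obtain ⟨g, hg1, hg2⟩ := exists_dual_vector ℝ (xh + z') (norm_ne_zero_iff.mpr hv0)
      simp only [RCLike.ofReal_real_eq_id, id_eq] at hg2
      have hgx : g xh ≤ 1 := by
        calc g xh ≤ |g xh| := le_abs_self _
        _ ≤ ‖g‖ * ‖xh‖ := g.le_opNorm xh
        _ = 1 := by rw [hg1, hxh, mul_one]
      have hgz : g z' ≤ 1 := by
        calc g z' ≤ |g z'| := le_abs_self _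
        _ ≤ ‖g‖ * ‖z'‖ := g.le_opNorm z'
        _ = 1 := by rw [hg1, hz'1, mul_one]
      have hsum : g xh + g z' = ‖xh + z'‖ := by rw [← map_add, hg2]
      have hgx' : 1 - δ ≤ g xh := by linarith
      have hgz' : 1 - δ ≤ g z' := by linarith
      have hle : g (x + b • z') ≤ ‖x + b • z'‖ := by
        calc g (x + b • z') ≤ |g (x + b • z')| := le_abs_self _
        _ ≤ ‖g‖ * ‖x + b • z'‖ := g.le_opNorm _
        _ = ‖x + b • z'‖ := by rw [hg1, one_mul]
      have heq : g (x + b • z') = ‖x‖ * g xh + b * g z' := by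
        rw [map_add, ← hbx, map_smul, map_smul, smul_eq_mul, smul_eq_mul, hbx]
      have hxnn : (0:ℝ) ≤ ‖x‖ := norm_nonneg x
      nlinarith
    · have hyz : y - b • z' = b • (yh - z') := by
        rw [smul_sub, hby]
      rw [hyz, map_smul, map_smul, norm_smul, Real.norm_eq_abs, abs_of_pos hb0,
        smul_eq_mul, abs_mul, abs_of_pos hb0, ← mul_add]
      calc b * (‖T (yh - z')‖ + |f (yh - z')|) ≤ 1 * δ := by
            apply mul_le_mul hy1 hz'3 (by positivity) zero_le_one
      _ = δ := one_mul δ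

set_option maxHeartbeats 1000000 in
theorem narrow_of_restrictions_oneSum
    {X₁ X₂ Y : Type*}
    [NormedAddCommGroup X₁] [NormedSpace ℝ X₁] [CompleteSpace X₁]
    [NormedAddCommGroup X₂] [NormedSpace ℝ X₂] [CompleteSpace X₂]
    [NormedAddCommGroup Y] [NormedSpace ℝ Y] [CompleteSpace Y]
    (T : WithLp 1 (X₁ × X₂) →L[ℝ] Y)
    (T₁ : X₁ →L[ℝ] Y) (T₂ : X₂ →L[ℝ] Y)
    (hT₁ : ∀ x₁ : X₁, T₁ x₁ = T ((WithLp.prodContinuousLinearEquiv 1 ℝ X₁ X₂).symm (x₁, 0)))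
    (hT₂ : ∀ x₂ : X₂, T₂ x₂ = T ((WithLp.prodContinuousLinearEquiv 1 ℝ X₁ X₂).symm (0, x₂)))
    (h₁ : IsNarrow T₁) (h₂ : IsNarrow T₂) :
    IsNarrow T := by
  set e := WithLp.prodContinuousLinearEquiv 1 ℝ X₁ X₂ with he
  have norm1 : ∀ v : WithLp 1 (X₁ × X₂), ‖v‖ = ‖v.fst‖ + ‖v.snd‖ := by
    intro v
    rw [WithLp.prod_norm_eq_of_nat 1 (by norm_cast)]
    simp
  have hsymm : ∀ (a : X₁) (b : X₂),
      (e.symm (a, b) : WithLp 1 (X₁ × X₂)) = e.symm (a, 0) + e.symm (0, b) := by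
    intro a b
    rw [← map_add]
    norm_num
  intro x y hx hy f ε hε
  set δ : ℝ := min (ε / 2) 2⁻¹ with hδ_def
  have hδ0 : 0 < δ := lt_min (by linarith) (by norm_num)
  have hδ1 : δ < 1 := lt_of_le_of_lt (min_le_right _ _) (by norm_num)
  have hδε : 2 * δ ≤ ε := by
    have := min_le_left (ε / 2) 2⁻¹
    linarith
  have hxn : ‖x.fst‖ + ‖x.snd‖ = 1 := by rw [← norm1, hx]
  have hyn : ‖y.fst‖ + ‖y.snd‖ = 1 := by rw [← norm1, hy]
  -- the component functionals
  set f₁ : X₁ →L[ℝ] ℝ :=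
    f.comp (e.symm.toContinuousLinearMap.comp (ContinuousLinearMap.inl ℝ X₁ X₂)) with hf₁
  set f₂ : X₂ →L[ℝ] ℝ :=
    f.comp (e.symm.toContinuousLinearMap.comp (ContinuousLinearMap.inr ℝ X₁ X₂)) with hf₂
  have hf₁' : ∀ a : X₁, f₁ a = f (e.symm (a, 0)) := fun a => rfl
  have hf₂' : ∀ b : X₂, f₂ b = f (e.symm (0, b)) := fun b => rfl
  have hTsplit : ∀ (a : X₁) (b : X₂), T (e.symm (a, b)) = T₁ a + T₂ b := by
    intro a b
    rw [hT₁, hT₂, ← map_add, ← hsymm]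
  have hfsplit : ∀ (a : X₁) (b : X₂), f (e.symm (a, b)) = f₁ a + f₂ b := by
    intro a b
    rw [hf₁' a, hf₂' b, ← map_add, ← hsymm]
  obtain ⟨z₁, hz11, hz12, hz13⟩ :=
    IsNarrow.exists_scaled T₁ h₁ x.fst y.fst (by linarith [norm_nonneg y.snd]) f₁ δ hδ0 hδ1
  obtain ⟨z₂, hz21, hz22, hz23⟩ :=
    IsNarrow.exists_scaled T₂ h₂ x.snd y.snd (by linarith [norm_nonneg y.fst]) f₂ δ hδ0 hδ1
  refine ⟨e.symm (z₁, z₂), ?_, ?_, ?_⟩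
  · rw [norm1]
    show ‖z₁‖ + ‖z₂‖ = 1
    rw [hz11, hz21, hyn]
  · have hx_dec : (e.symm (x.fst, x.snd) : WithLp 1 (X₁ × X₂)) = x := rfl
    have hxz : x + e.symm (z₁, z₂) = e.symm (x.fst + z₁, x.snd + z₂) := by
      conv_lhs => rw [← hx_dec]
      rw [← map_add, Prod.mk_add_mk]
    rw [hxz, norm1]
    show 2 - ε ≤ ‖x.fst + z₁‖ + ‖x.snd + z₂‖
    have h1 : (‖x.fst‖ + ‖y.fst‖) * (1 - δ) + (‖x.snd‖ + ‖y.snd‖) * (1 - δ) = 2 - 2 * δ := by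
      linear_combination (1 - δ) * hxn + (1 - δ) * hyn
    linarith
  · have hy_dec : (e.symm (y.fst, y.snd) : WithLp 1 (X₁ × X₂)) = y := rfl
    have hyz : y - e.symm (z₁, z₂) = e.symm (y.fst - z₁, y.snd - z₂) := by
      conv_lhs => rw [← hy_dec]
      rw [← map_sub, Prod.mk_sub_mk]
    rw [hyz, hTsplit, hfsplit]
    calc ‖T₁ (y.fst - z₁) + T₂ (y.snd - z₂)‖ + |f₁ (y.fst - z₁) + f₂ (y.snd - z₂)|
        ≤ (‖T₁ (y.fst - z₁)‖ + ‖T₂ (y.snd - z₂)‖) +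
          (|f₁ (y.fst - z₁)| + |f₂ (y.snd - z₂)|) :=
          add_le_add (norm_add_le _ _) (abs_add_le _ _)
      _ ≤ δ + δ := by linarith
      _ ≤ ε := by linarith
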